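/- arXiv:1810.11638 — 2 statements merged into one kernel-verified Lean document; each statement's English description precedes it below -/
import Mathlib

section
/- Let R be a ring. The class of absolutely pure right R-modules is closed under homomorphic images if and only if for every short exact sequence 0 → Z → U → V → 0 with V finitely presented and U projective, the module Z is projective (i.e., R is right semihereditary). -/
open CategoryTheory

noncomputable section
open CategoryTheory.Limits CategoryTheory.Projective
section Resolution
variable {C : Type*} [Category C] [Abelian C] [EnoughProjectives C]

namespace MyRes

variable {U V : C} (π : U ⟶ V)

/-- Auxiliary complex. -/
def ofComplex [Projective U] [Epi π] : ChainComplex C ℕ :=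
  ChainComplex.mk' U (Projective.syzygies π) (Projective.d π)
    (fun f => ⟨_, Projective.d f, by simp only [Projective.d]; erw [Category.assoc, kernel.condition, comp_zero]⟩)

variable [Projective U] [Epi π]

lemma ofComplex_d_1_0 : (ofComplex π).d 1 0 = d π := by
  simp [ofComplex]

lemma ofComplex_exactAt_succ (n : ℕ) :
    (ofComplex π).ExactAt (n + 1) := by
  rw [HomologicalComplex.exactAt_iff' _ (n + 1 + 1) (n + 1) n (by simp) (by simp)]
  refine ShortComplex.exact_of_iso ?_ (exact_d_f ((ofComplex π).d (n + 1) n))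
  refine ShortComplex.isoMk (ChainComplex.mk'XIso U (Projective.syzygies π) (Projective.d π)
    (fun f => ⟨_, Projective.d f, by simp only [Projective.d]; erw [Category.assoc, kernel.condition, comp_zero]⟩) n).symm (Iso.refl _) (Iso.refl _) ?_ ?_
  · dsimp
    erw [Category.comp_id, Iso.inv_comp_eq]
    exact ChainComplex.mk'_d U (Projective.syzygies π) (Projective.d π)
      (fun f => ⟨_, Projective.d f, by simp only [Projective.d]; erw [Category.assoc, kernel.condition, comp_zero]⟩) n
  · dsimp
    exact (Category.id_comp _).trans (Category.comp_id _).symm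

instance (n : ℕ) : Projective ((ofComplex π).X n) := by
  obtain (_ | _ | _ | n) := n
  · exact ‹Projective U›
  all_goals apply Projective.projective_over

/-- Projective resolution from an epi from a projective object. -/
def ofEpi : ProjectiveResolution V where
  complex := ofComplex π
  π := (ChainComplex.toSingle₀Equiv _ _).symm ⟨π, by
          erw [ofComplex_d_1_0, Category.assoc, kernel.condition, comp_zero]⟩
  quasiIso := ⟨fun n => by
    cases n
    · rw [ChainComplex.quasiIsoAt₀_iff, ShortComplex.quasiIso_iff_of_zeros']
      · refine (ShortComplex.exact_and_epi_g_iff_of_iso ?_).2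
          ⟨exact_d_f π, by dsimp; infer_instance⟩
        exact ShortComplex.isoMk (Iso.refl _) (Iso.refl _) (Iso.refl _)
          (by simp [ofComplex]; erw [Category.id_comp, Category.comp_id]) (by simp; erw [Category.id_comp, Category.comp_id, ChainComplex.toSingle₀Equiv_symm_apply_f_zero])
      all_goals rfl
    · rw [quasiIsoAt_iff_exactAt']
      · apply ofComplex_exactAt_succ
      · apply ChainComplex.exactAt_succ_single_obj⟩

lemma ofEpi_d_1_0 : (ofEpi π).complex.d 1 0 = Projective.π (kernel π) ≫ kernel.ι π :=
  ofComplex_d_1_0 π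

end MyRes
end Resolution


/-- Factorization of a linear map through a surjection killing its kernel. -/
lemma linearMap_factor {R M N P : Type*} [Ring R] [AddCommGroup M] [AddCommGroup N]
    [AddCommGroup P] [Module R M] [Module R N] [Module R P] (p : M →ₗ[R] N)
    (hp : Function.Surjective p) (t : M →ₗ[R] P) (h : LinearMap.ker p ≤ LinearMap.ker t) :
    ∃ φ : N →ₗ[R] P, φ ∘ₗ p = t := by
  let pbar := (LinearMap.ker p).liftQ p (le_refl _)
  have hinj : Function.Injective pbar := by
    rw [← LinearMap.ker_eq_bot]
    exact Submodule.ker_liftQ_eq_bot _ _ _ (le_refl _)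
  have hsurj : Function.Surjective pbar := by
    intro n; obtain ⟨m, rfl⟩ := hp n; exact ⟨Submodule.Quotient.mk m, rfl⟩
  let eqv := LinearEquiv.ofBijective pbar ⟨hinj, hsurj⟩
  refine ⟨((LinearMap.ker p).liftQ t h).comp eqv.symm.toLinearMap, ?_⟩
  ext m
  have h1 : eqv.symm (p m) = Submodule.Quotient.mk m := by
    apply eqv.injective
    rw [LinearEquiv.apply_symm_apply]
    rfl
  simp only [LinearMap.comp_apply, LinearEquiv.coe_coe, h1]
  rfl

/-- `Ext¹_R(M, N)` as an object of `ModuleCat ℤ`. -/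
noncomputable abbrev ext1 {R : Type} [Ring R] (M N : ModuleCat.{0} R) : ModuleCat ℤ :=
  ((Ext ℤ (ModuleCat.{0} R) 1).obj (Opposite.op M)).obj N

/-- A module `X` is absolutely pure if `Ext¹(F, X) = 0` for every finitely presented `F`. -/
def AbsolutelyPure {R : Type} [Ring R] (X : ModuleCat.{0} R) : Prop :=
  ∀ F : ModuleCat.{0} R, Module.FinitePresentation R F → Subsingleton (ext1 F X)

lemma key_lemma {R : Type} [Ring R] (Z U V Y : ModuleCat.{0} R)
    (f : Z →ₗ[R] U) (g : U →ₗ[R] V) (hf : Function.Injective f)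
    (hg : Function.Surjective g) (hfg : Function.Exact f g)
    (hU : Module.Projective R U) :
    Subsingleton (ext1 V Y) ↔ ∀ φ : Z →ₗ[R] Y, ∃ ψ : U →ₗ[R] Y, ψ ∘ₗ f = φ := by
  classical
  haveI : Projective U := (IsProjective.iff_projective (R := R) U).mp hU
  let gh : U ⟶ V := ModuleCat.ofHom g
  haveI : Epi gh := (ModuleCat.epi_iff_surjective _).2 hg
  let P := MyRes.ofEpi gh
  let K := P.complex.linearYonedaObj ℤ Y
  -- the kernel object and comparison map
  let kk : ModuleCat.{0} R := kernel gh
  let ι : kk ⟶ U := kernel.ι gh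
  have hι : Function.Injective ι := (ModuleCat.mono_iff_injective ι).1 inferInstance
  have hιg : ∀ x, g (ι x) = 0 := fun x => ConcreteCategory.congr_hom (kernel.condition gh) x
  have hrange : ∀ x : ↥kk, ι x ∈ LinearMap.range f := fun x => (hfg (ι x)).1 (hιg x)
  let e : ↥kk →ₗ[R] ↥Z :=
    (LinearEquiv.ofInjective f hf).symm.toLinearMap ∘ₗ
      LinearMap.codRestrict _ ι.hom hrange
  have he : ∀ x, f (e x) = ι x := by
    intro x
    have h2 := (LinearEquiv.ofInjective f hf).apply_symm_apply
      (LinearMap.codRestrict _ ι.hom hrange x)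
    exact ((LinearEquiv.ofInjective_apply f (h := hf) (e x)).symm.trans (congrArg Subtype.val h2))
  have hesurj : Function.Surjective e := by
    intro z
    have hz : g (f z) = 0 := hfg.apply_apply_eq_zero z
    refine ⟨(ModuleCat.kernelIsoKer gh).inv ⟨f z, LinearMap.mem_ker.2 hz⟩, ?_⟩
    have h3 : ι ((ModuleCat.kernelIsoKer gh).inv ⟨f z, LinearMap.mem_ker.2 hz⟩) = f z :=
      ConcreteCategory.congr_hom (ModuleCat.kernelIsoKer_inv_kernel_ι gh) (⟨f z, LinearMap.mem_ker.2 hz⟩ :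
        LinearMap.ker gh.hom)
    apply hf
    rw [he, h3]
  let π1 : P.complex.X 1 ⟶ kk := Projective.π (kernel gh)
  have hπ1 : Function.Surjective π1 :=
    (ModuleCat.epi_iff_surjective _).1 (show Epi (Projective.π (kernel gh)) from inferInstance)
  have hd10 : P.complex.d 1 0 = π1 ≫ ι := MyRes.ofEpi_d_1_0 gh
  have hd21π : P.complex.d 2 1 ≫ π1 = 0 := by
    rw [← cancel_mono (kernel.ι gh)]
    show P.complex.d 2 1 ≫ (π1 ≫ ι) = 0 ≫ kernel.ι gh
    have h0 := P.complex.d_comp_d 2 1 0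
    rw [hd10] at h0
    rw [zero_comp]; exact h0
  have hsub : Subsingleton (ext1 V Y) ↔ IsZero (K.homology 1) := by
    constructor
    · intro h
      exact (ModuleCat.isZero_of_subsingleton (ext1 V Y)).of_iso (P.isoExt 1 Y).symm
    · intro h
      have h2 : IsZero (ext1 V Y) := h.of_iso (P.isoExt 1 Y)
      refine ⟨fun a b => ?_⟩
      have hid : (𝟙 (ext1 V Y) : ext1 V Y ⟶ ext1 V Y) = 0 := h2.eq_of_src _ _
      have ha := ConcreteCategory.congr_hom hid a
      have hb := ConcreteCategory.congr_hom hid b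
      exact ha.trans hb.symm
  rw [hsub, ← HomologicalComplex.exactAt_iff_isZero_homology,
    HomologicalComplex.exactAt_iff' K 0 1 2 (by simp) (by simp),
    ShortComplex.moduleCat_exact_iff]
  simp only [HomologicalComplex.shortComplexFunctor'_obj_X₁,
    HomologicalComplex.shortComplexFunctor'_obj_X₂, HomologicalComplex.shortComplexFunctor'_obj_f,
    HomologicalComplex.shortComplexFunctor'_obj_g, ChainComplex.linearYonedaObj_X,
    ChainComplex.linearYonedaObj_d]
  have heinj : Function.Injective e := fun a b hab => hι (by rw [← he, ← he, hab])
  constructor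
  · intro hexact φ
    let α : P.complex.X 1 ⟶ Y := ModuleCat.ofHom ((φ ∘ₗ e) ∘ₗ π1.hom)
    have hαd : ∀ x, α ((P.complex.d 2 1) x) = 0 := by
      intro x
      have h5 : π1 ((P.complex.d 2 1) x) = 0 := ConcreteCategory.congr_hom hd21π x
      show φ (e (π1 ((P.complex.d 2 1) x))) = 0
      rw [h5, map_zero, map_zero]
    obtain ⟨β, hβ⟩ := hexact α (by
      apply ModuleCat.hom_ext
      apply LinearMap.ext
      intro x
      exact hαd x)
    let β' : U ⟶ Y := β
    have hβ2 : P.complex.d 1 0 ≫ β' = α := hβ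
    have hβ' : ∀ x, β' ((P.complex.d 1 0) x) = α x := fun x => ConcreteCategory.congr_hom hβ2 x
    refine ⟨β'.hom, ?_⟩
    apply LinearMap.ext
    intro z
    obtain ⟨k, hk⟩ := hesurj z
    have h6 : f z = ι k := by rw [← hk, he]
    show β' (f z) = φ z
    obtain ⟨x, hx⟩ := hπ1 k
    have h8 : (P.complex.d 1 0) x = ι k := by
      rw [hd10]; show ι (π1 x) = ι k; rw [hx]
    rw [h6, ← h8, hβ' x]
    show φ (e (π1 x)) = φ z
    rw [hx, hk]
  · intro hext x₂ hx₂
    let α : P.complex.X 1 ⟶ Y := x₂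
    have hx₂' : P.complex.d 2 1 ≫ α = 0 := hx₂
    have hαd21 : ∀ w, α ((P.complex.d 2 1) w) = 0 := fun w =>
      ConcreteCategory.congr_hom hx₂' w
    have hres := P.complex_exactAt_succ 0
    rw [HomologicalComplex.exactAt_iff' P.complex 2 1 0 (by simp) (by simp),
      ShortComplex.moduleCat_exact_iff] at hres
    let ep : ↥(P.complex.X 1) →ₗ[R] ↥Z := e ∘ₗ π1.hom
    have hepsurj : Function.Surjective ep := hesurj.comp hπ1
    have hkerep : LinearMap.ker ep ≤
        LinearMap.ker (α : P.complex.X 1 ⟶ Y).hom := by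
      intro x hx
      have h9 : e (π1 x) = 0 := hx
      have h10 : π1 x = 0 := heinj (by rw [h9, map_zero])
      have hd0 : P.complex.d 1 0 x = 0 := by
        rw [hd10]; show ι (π1 x) = 0; rw [h10, map_zero]
      obtain ⟨w, hw⟩ := hres x hd0
      show α x = 0
      rw [← hw]
      exact hαd21 w
    obtain ⟨φ, hφ⟩ := linearMap_factor ep hepsurj _ hkerep
    obtain ⟨ψ, hψ⟩ := hext φ
    let ψ' : U ⟶ Y := ModuleCat.ofHom ψ
    refine ⟨ψ', ?_⟩
    show P.complex.d 1 0 ≫ ψ' = α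
    apply ModuleCat.hom_ext
    apply LinearMap.ext
    intro x
    show ψ ((P.complex.d 1 0) x) = α x
    have h11 : (P.complex.d 1 0) x = f (e (π1 x)) := by
      rw [hd10, he]; rfl
    rw [h11]
    have h12 : ψ (f (e (π1 x))) = φ (e (π1 x)) := DFunLike.congr_fun hψ (e (π1 x))
    rw [h12]
    exact DFunLike.congr_fun hφ x

lemma exact_subtype_of_ker {R : Type} [Ring R] {M N : Type} [AddCommGroup M] [AddCommGroup N]
    [Module R M] [Module R N] (p : M →ₗ[R] N) :
    Function.Exact (LinearMap.ker p).subtype p := by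
  intro y
  constructor
  · intro hy; exact ⟨⟨y, hy⟩, rfl⟩
  · rintro ⟨⟨y, hy⟩, rfl⟩; exact hy

/- STATEMENT 7: the class of absolutely pure modules is closed under homomorphic images iff
for every short exact sequence 0 → Z → U → V → 0 with `V` finitely presented and `U`
projective, the module `Z` is projective. -/
theorem stmt7 (R : Type) [Ring R] :
    (∀ X : ModuleCat.{0} R, AbsolutelyPure X →
      ∀ (Y : ModuleCat.{0} R) (g : X →ₗ[R] Y), Function.Surjective g → AbsolutelyPure Y) ↔
    (∀ (Z U V : ModuleCat.{0} R) (f : Z →ₗ[R] U) (g : U →ₗ[R] V),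
      Function.Injective f → Function.Surjective g → Function.Exact f g →
      Module.FinitePresentation R V → Module.Projective R U → Module.Projective R Z) := by
  constructor
  · intro hyp Zc Uc Vc f g hfinj hgsurj hex hV hU
    classical
    let A : ModuleCat.{0} R := ModuleCat.of R (↥Zc →₀ R)
    let p : ↥A →ₗ[R] ↥Zc := Finsupp.linearCombination R id
    have hp : Function.Surjective p := Finsupp.linearCombination_id_surjective R ↥Zc
    let E : ModuleCat.{0} R := CategoryTheory.Injective.under A
    let i : A ⟶ E := CategoryTheory.Injective.ι A
    have hiinj : Function.Injective i := (ModuleCat.mono_iff_injective i).1 inferInstance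
    let Ksub : Submodule R ↥E := (LinearMap.ker p).map i.hom
    let Y : ModuleCat.{0} R := ModuleCat.of R (↥E ⧸ Ksub)
    let q : ↥E →ₗ[R] ↥Y := Ksub.mkQ
    have hq : Function.Surjective q := Submodule.mkQ_surjective _
    have hE : AbsolutelyPure E := by
      intro F hF
      haveI : Module.FinitePresentation R ↥F := hF
      obtain ⟨n, pF, hpF⟩ := Module.Finite.exists_fin' R ↥F
      let ZF : ModuleCat.{0} R := ModuleCat.of R (LinearMap.ker pF)
      let UF : ModuleCat.{0} R := ModuleCat.of R (Fin n → R)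
      let iF : ↥ZF →ₗ[R] ↥UF := (LinearMap.ker pF).subtype
      have hiF : Function.Injective iF := Submodule.injective_subtype _
      rw [key_lemma ZF UF F E iF pF hiF hpF (exact_subtype_of_ker pF)
        (inferInstanceAs (Module.Projective R (Fin n → R)))]
      intro φ
      let iFh : ZF ⟶ UF := ModuleCat.ofHom iF
      haveI : Mono iFh := (ModuleCat.mono_iff_injective iFh).2 hiF
      refine ⟨(CategoryTheory.Injective.factorThru (show ZF ⟶ E from ModuleCat.ofHom φ) iFh).hom, ?_⟩
      exact congrArg ModuleCat.Hom.hom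
        (CategoryTheory.Injective.comp_factorThru (show ZF ⟶ E from ModuleCat.ofHom φ) iFh)
    have hY : AbsolutelyPure Y := hyp E hE Y q hq
    have hVY : Subsingleton (ext1 Vc Y) := hY Vc hV
    rw [key_lemma Zc Uc Vc Y f g hfinj hgsurj hex hU] at hVY
    have hkerle : LinearMap.ker p ≤ LinearMap.ker (q ∘ₗ i.hom) := by
      intro a ha
      show q (i a) = 0
      exact (Submodule.Quotient.mk_eq_zero _).2 ⟨a, ha, rfl⟩
    obtain ⟨φ, hφ⟩ := linearMap_factor p hp (q ∘ₗ i.hom) hkerle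
    obtain ⟨ψ, hψ⟩ := hVY φ
    haveI : Module.Projective R ↥Uc := hU
    obtain ⟨h, hh⟩ := Module.projective_lifting_property q ψ hq
    let w : ↥Zc →ₗ[R] ↥E := h ∘ₗ f
    have hsub : ∀ (z : ↥Zc) (a : ↥A), p a = z → w z - i a ∈ Ksub := by
      intro z a ha
      have h2 : q (h (f z)) = ψ (f z) := DFunLike.congr_fun hh (f z)
      have h3 : ψ (f z) = φ z := DFunLike.congr_fun hψ z
      have h4 : φ (p a) = q (i a) := DFunLike.congr_fun hφ a
      have h1 : q (w z) = q (i a) := by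
        rw [show w z = h (f z) from rfl, h2, h3, ← ha, h4]
      have h5 : q (w z - i a) = 0 := by rw [map_sub, h1, sub_self]
      have h6 : w z - i a ∈ LinearMap.ker q := h5
      rwa [show LinearMap.ker q = Ksub from Submodule.ker_mkQ Ksub] at h6
    have hwrange : ∀ z, w z ∈ LinearMap.range i.hom := by
      intro z
      obtain ⟨a, ha⟩ := hp z
      obtain ⟨a', _, haa⟩ := hsub z a ha
      exact ⟨a' + a, by rw [map_add, haa, sub_add_cancel]⟩
    let eqA : ↥A ≃ₗ[R] LinearMap.range i.hom :=
      LinearEquiv.ofInjective _ hiinj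
    let σ : ↥Zc →ₗ[R] ↥A :=
      eqA.symm.toLinearMap ∘ₗ LinearMap.codRestrict _ w hwrange
    have hiσ : ∀ z, i (σ z) = w z := by
      intro z
      have h2 := eqA.apply_symm_apply (LinearMap.codRestrict _ w hwrange z)
      exact ((LinearEquiv.ofInjective_apply i.hom (h := hiinj)
        (σ z)).symm.trans (congrArg Subtype.val h2))
    have hpσ : ∀ z, p (σ z) = z := by
      intro z
      obtain ⟨a, ha⟩ := hp z
      obtain ⟨a', ha', haa⟩ := hsub z a ha
      have h7 : σ z - a = a' := hiinj (by rw [map_sub, haa, hiσ])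
      have h8 : p (σ z - a) = 0 := by rw [h7]; exact ha'
      have h9 : p (σ z) - p a = 0 := by rw [← map_sub]; exact h8
      calc p (σ z) = p a := sub_eq_zero.1 h9
      _ = z := ha
    exact Module.projective_def'.2 ⟨σ, by ext z; exact hpσ z⟩
  · intro hyp X hX Y q hq F hF
    haveI : Module.FinitePresentation R ↥F := hF
    obtain ⟨n, p, hp⟩ := Module.Finite.exists_fin' R ↥F
    let Uc : ModuleCat.{0} R := ModuleCat.of R (Fin n → R)
    let Zc : ModuleCat.{0} R := ModuleCat.of R (LinearMap.ker p)
    let i : ↥Zc →ₗ[R] ↥Uc := (LinearMap.ker p).subtype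
    have hi : Function.Injective i := Submodule.injective_subtype _
    have hUproj : Module.Projective R ↥Uc :=
      inferInstanceAs (Module.Projective R (Fin n → R))
    have hZproj : Module.Projective R ↥Zc :=
      hyp Zc Uc F i p hi hp (exact_subtype_of_ker p) hF hUproj
    rw [key_lemma Zc Uc F Y i p hi hp (exact_subtype_of_ker p) hUproj]
    intro φ
    haveI : Module.Projective R ↥Zc := hZproj
    obtain ⟨φ', hφ'⟩ := Module.projective_lifting_property q φ hq
    have hXF : Subsingleton (ext1 F X) := hX F hF
    rw [key_lemma Zc Uc F X i p hi hp (exact_subtype_of_ker p) hUproj] at hXF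
    obtain ⟨ψ', hψ'⟩ := hXF φ'
    exact ⟨q ∘ₗ ψ', by rw [LinearMap.comp_assoc, hψ', hφ']⟩

end
end

section
/- Let R be a ring. Every right R-module X satisfies Ext¹_R(S, X) = 0 for all simple right R-modules S (i.e., every module is absolutely neat) if and only if R is semisimple. -/
open CategoryTheory

lemma subsingleton_of_isZero' {M : ModuleCat ℤ} (h : Limits.IsZero M) : Subsingleton M := by
  constructor
  intro a b
  have h0 : (𝟙 M : M ⟶ M) = 0 := h.eq_of_src _ _
  have key : ∀ x : M, x = (0 : M ⟶ M) x := fun x => by rw [← h0]; rfl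
  rw [key a, key b]
  rfl

lemma projective_of_isSemisimpleRing {R M : Type} [Ring R] [IsSemisimpleRing R]
    [AddCommGroup M] [Module R M] : Module.Projective R M := by
  classical
  let f : (M →₀ R) →ₗ[R] M := Finsupp.linearCombination R id
  have hf : Function.Surjective f := fun m => ⟨Finsupp.single m 1, by simp [f]⟩
  obtain ⟨q, hq⟩ := exists_isCompl (LinearMap.ker f)
  let e : M ≃ₗ[R] q :=
    (LinearMap.quotKerEquivOfSurjective f hf).symm.trans
      (Submodule.quotientEquivOfIsCompl _ q hq)
  refine Module.Projective.of_split (q.subtype ∘ₗ e.toLinearMap) f ?_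
  ext m
  have h1 : (Submodule.Quotient.mk (e m : (M →₀ R)) : (M →₀ R) ⧸ LinearMap.ker f)
      = (LinearMap.quotKerEquivOfSurjective f hf).symm m := by
    simpa [e] using Submodule.mk_quotientEquivOfIsCompl_apply hq
      ((LinearMap.quotKerEquivOfSurjective f hf).symm m)
  have h2 : f (e m : (M →₀ R)) = m := by
    have := congrArg (LinearMap.quotKerEquivOfSurjective f hf) h1
    rwa [LinearEquiv.apply_symm_apply] at this
  simpa using h2

lemma linearYonedaObj_d_eq {R : Type} [Ring R] (C : ChainComplex (ModuleCat.{0} R) ℕ)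
    (Y : ModuleCat.{0} R) (i j : ℕ) (x : C.X i ⟶ Y) :
    (C.linearYonedaObj ℤ Y).d i j x = C.d j i ≫ x := rfl

lemma ext_vanish_imp_projective {R : Type} [Ring R] (S : ModuleCat.{0} R)
    (h : ∀ X : ModuleCat.{0} R, Subsingleton (ext1 S X)) :
    Module.Projective R S := by
  obtain ⟨P⟩ : Nonempty (ProjectiveResolution S) := ⟨ProjectiveResolution.of S⟩
  let d10 : P.complex.X 1 ⟶ P.complex.X 0 := P.complex.d 1 0
  let K : Submodule R (P.complex.X 0) := LinearMap.range d10.hom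
  let Y : ModuleCat.{0} R := ModuleCat.of R K
  have hsub : Subsingleton (ext1 S Y) := h Y
  have hz : Limits.IsZero ((P.complex.linearYonedaObj ℤ Y).homology 1) :=
    Limits.IsZero.of_iso (ModuleCat.isZero_of_subsingleton _) (P.isoExt 1 Y).symm
  have hex : (P.complex.linearYonedaObj ℤ Y).ExactAt 1 :=
    (HomologicalComplex.exactAt_iff_isZero_homology _ _).2 hz
  rw [HomologicalComplex.exactAt_iff' _ 0 1 2 (by simp) (by simp)] at hex
  rw [ShortComplex.moduleCat_exact_iff] at hex
  -- the cocycle φ : P₁ ⟶ Y, corestriction of d10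
  let φ : P.complex.X 1 ⟶ Y := ModuleCat.ofHom d10.hom.rangeRestrict
  have hφ0 : (P.complex.linearYonedaObj ℤ Y).d 1 2 φ = 0 := by
    show P.complex.d 2 1 ≫ φ = (0 : P.complex.X 2 ⟶ Y)
    ext x
    have h0 : P.complex.d 2 1 ≫ d10 = 0 := P.complex.d_comp_d 2 1 0
    have : d10 (P.complex.d 2 1 x) = 0 :=
      congrArg (fun (g : P.complex.X 2 ⟶ P.complex.X 0) => g x) h0
    exact this
  obtain ⟨ψ₀, hψ₀⟩ := hex φ hφ0
  let ψ : P.complex.X 0 ⟶ Y := ψ₀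
  have hψ : P.complex.d 1 0 ≫ ψ = φ := hψ₀
  have hψ' : ∀ x : P.complex.X 1, ψ (d10 x) = φ x := fun x =>
    congrArg (fun (g : P.complex.X 1 ⟶ Y) => g x) hψ
  have hr : ∀ k : K, ψ (k : P.complex.X 0) = k := by
    rintro ⟨_, x, rfl⟩
    exact (hψ' x).trans rfl
  -- the projection π : P₀ ⟶ S
  let π : P.complex.X 0 ⟶ S := P.π.f 0
  have hsurj : Function.Surjective π := (ModuleCat.epi_iff_surjective π).1 (inferInstanceAs (Epi (P.π.f 0)))
  have hker : K = LinearMap.ker π.hom :=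
    (ShortComplex.moduleCat_exact_iff_range_eq_ker _).1 P.exact₀
  -- the splitting of π
  let ψ' : P.complex.X 0 →ₗ[R] K := ψ.hom
  let f : P.complex.X 0 →ₗ[R] P.complex.X 0 :=
    LinearMap.id - K.subtype ∘ₗ ψ'
  have hKf : LinearMap.ker π.hom ≤ LinearMap.ker f := by
    intro x hx
    rw [← hker] at hx
    have hx' : ψ' x = ⟨x, hx⟩ := hr ⟨x, hx⟩
    have hfx : f x = x - K.subtype (ψ' x) := rfl
    rw [LinearMap.mem_ker, hfx, hx']
    simp
  let g : (P.complex.X 0 ⧸ LinearMap.ker π.hom) →ₗ[R] P.complex.X 0 :=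
    Submodule.liftQ _ f hKf
  let e := LinearMap.quotKerEquivOfSurjective π.hom hsurj
  let sec : S →ₗ[R] P.complex.X 0 := g ∘ₗ (e.symm : S →ₗ[R] _)
  have H : π.hom ∘ₗ sec = LinearMap.id := by
    ext y
    obtain ⟨x, rfl⟩ := hsurj y
    have h1 : e.symm (π x) = Submodule.Quotient.mk x := by
      rw [LinearEquiv.symm_apply_eq]; rfl
    have h2 : sec (π x) = f x := by
      show g (e.symm (π x)) = f x
      rw [h1]
      exact Submodule.liftQ_apply _ _ _
    have h3 : K.subtype (ψ' x) ∈ LinearMap.ker π.hom := by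
      rw [← hker]; exact (ψ' x).2
    have h4 : π (f x) = π x := by
      have hfx : f x = x - K.subtype (ψ' x) := rfl
      rw [hfx, map_sub, LinearMap.mem_ker.1 h3, sub_zero]
    show π (sec (π x)) = π x
    rw [h2, h4]
  haveI : Module.Projective R (P.complex.X 0) :=
    (IsProjective.iff_projective (P.complex.X 0)).2 (inferInstance : Projective (P.complex.X 0))
  exact Module.Projective.of_split sec π.hom H

/- STATEMENT 14: every module `X` satisfies `Ext¹(S, X) = 0` for all simple `S` (i.e. every
module is absolutely neat) iff `R` is semisimple. -/
theorem stmt14 (R : Type) [Ring R] :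
    (∀ X : ModuleCat.{0} R, ∀ S : ModuleCat.{0} R, IsSimpleModule R S →
      Subsingleton (ext1 S X)) ↔ IsSemisimpleRing R := by
  constructor
  · intro h
    refine IsSemisimpleModule.of_sSup_simples_eq_top ?_
    by_contra hne
    obtain ⟨m, hmax, hle⟩ :=
      Ideal.exists_le_maximal (sSup {p : Submodule R R | IsSimpleModule R p}) hne
    have hco : IsCoatom (m : Submodule R R) := hmax.out
    have hsimple : IsSimpleModule R (R ⧸ (m : Submodule R R)) :=
      isSimpleModule_iff_isCoatom.2 hco
    have hproj : Module.Projective R (R ⧸ (m : Submodule R R)) :=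
      ext_vanish_imp_projective (ModuleCat.of R (R ⧸ (m : Submodule R R)))
        (fun X => h X _ hsimple)
    obtain ⟨s, hs⟩ := Module.projective_lifting_property (m : Submodule R R).mkQ LinearMap.id
      (Submodule.mkQ_surjective _)
    have hinj : Function.Injective s := by
      intro a b hab
      have := congrArg (m : Submodule R R).mkQ hab
      rwa [← LinearMap.comp_apply, ← LinearMap.comp_apply, hs, LinearMap.id_apply,
        LinearMap.id_apply] at this
    have hsimple' : IsSimpleModule R (LinearMap.range s) :=
      IsSimpleModule.congr (LinearEquiv.ofInjective s hinj).symm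
    have hle2 : LinearMap.range s ≤ (m : Submodule R R) :=
      le_trans (le_sSup hsimple') hle
    have : Nontrivial (R ⧸ (m : Submodule R R)) := IsSimpleModule.nontrivial R _
    obtain ⟨y, hy⟩ := exists_ne (0 : R ⧸ (m : Submodule R R))
    have hmem : s y ∈ (m : Submodule R R) := hle2 ⟨y, rfl⟩
    have hy0 : (m : Submodule R R).mkQ (s y) = y := by
      rw [← LinearMap.comp_apply, hs, LinearMap.id_apply]
    rw [Submodule.mkQ_apply, (Submodule.Quotient.mk_eq_zero _).2 hmem] at hy0
    exact hy hy0.symm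
  · intro hss X S hS
    haveI : Module.Projective R S := projective_of_isSemisimpleRing
    haveI : Projective S :=
      (IsProjective.iff_projective S).1 this
    exact subsingleton_of_isZero' (isZero_Ext_succ_of_projective S X 0)
end
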